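/- Feasible progress lemma: under the interpolation setup, assume in addition that (i) DΦ is norm-to-norm continuous at ρ₀, (ii) ‖ρ_λ − ρ₀‖ → 0 as λ → 0⁺, and (iii) there exist c > 0 and δ > 0 such that |⟨Δv₀, ρ_λ − ρ₀⟩| > c‖ρ_λ − ρ₀‖ for all λ ∈ (0,δ). Then there exists λ₀ > 0 such that Γ(v°, ρ_λ) < Γ(v°, ρ₀) for all λ ∈ (0, λ₀). -/

import Mathlib

open scoped Topology

/-- Excess energy `Γ(v,ρ) := F(ρ) + ⟨v,ρ⟩ − E(v)`. -/
noncomputable def Gam {B : Type*} [NormedAddCommGroup B] [NormedSpace ℝ B]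
    (F : B → EReal) (E : (B →L[ℝ] ℝ) → ℝ) (v : B →L[ℝ] ℝ) (ρ : B) : EReal :=
  F ρ + (v ρ : EReal) - (E v : EReal)


lemma gam_eq_aux {B : Type*} [NormedAddCommGroup B] [NormedSpace ℝ B]
    {F : B → EReal} {E : (B →L[ℝ] ℝ) → ℝ} {v : B →L[ℝ] ℝ} {ρ : B}
    (hb : F ρ ≠ ⊥) (h : Gam F E v ρ = 0) :
    F ρ = ((E v - v ρ : ℝ) : EReal) := by
  unfold Gam at h
  have ht : F ρ ≠ ⊤ := by
    intro h'
    rw [h', EReal.top_add_coe, EReal.top_sub_coe] at h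
    exact absurd h (by simp)
  obtain ⟨f, hf⟩ : ∃ f : ℝ, F ρ = (f : EReal) :=
    ⟨(F ρ).toReal, (EReal.coe_toReal ht hb).symm⟩
  rw [hf] at h ⊢
  rw [← EReal.coe_add, ← EReal.coe_sub, EReal.coe_eq_zero] at h
  rw [EReal.coe_eq_coe_iff]
  linarith

lemma E_le_aux {B : Type*} [NormedAddCommGroup B] [NormedSpace ℝ B]
    {F : B → EReal} {E : (B →L[ℝ] ℝ) → ℝ}
    (hE : ∀ v : B →L[ℝ] ℝ, (⨅ σ : B, F σ + (v σ : EReal)) = (E v : EReal)) 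
    (v : B →L[ℝ] ℝ) (ρ : B) :
    ((E v : ℝ) : EReal) ≤ F ρ + (v ρ : EReal) := by
  rw [← hE v]; exact iInf_le _ ρ

set_option maxHeartbeats 1000000 in
/-- Feasible progress lemma: under the interpolation setup, if `DΦ` is norm-continuous
at `ρ₀`, `‖ρ_λ − ρ₀‖ → 0` as `λ → 0⁺`, and `|⟨Δv₀, ρ_λ − ρ₀⟩| > c‖ρ_λ − ρ₀‖` near `0⁺`,
then `Γ(v°,ρ_λ) < Γ(v°,ρ₀)` for all sufficiently small `λ > 0`. -/
theorem feasible_progress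
    {B : Type*} [NormedAddCommGroup B] [NormedSpace ℝ B]
    (F₀ : B → EReal) (hFbot : ∀ σ : B, F₀ σ ≠ ⊥)
    (E₀ : (B →L[ℝ] ℝ) → ℝ)
    (hE₀ : ∀ v : B →L[ℝ] ℝ, (⨅ σ : B, F₀ σ + (v σ : EReal)) = (E₀ v : EReal))
    (Φ : B → ℝ) (DΦ : B → (B →L[ℝ] ℝ))
    (hΦ : ∀ ρ σ : B, HasDerivAt (fun t : ℝ => Φ (ρ + t • σ)) (DΦ ρ σ) 0)
    (E : (B →L[ℝ] ℝ) → ℝ)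
    (hE : ∀ v : B →L[ℝ] ℝ,
      (⨅ σ : B, (F₀ σ + (Φ σ : EReal)) + (v σ : EReal)) = (E v : EReal))
    -- interpolation setup
    (vt v₀ : B →L[ℝ] ℝ) (ρ₀ : B)
    (hGP₀ : Gam F₀ E₀ v₀ ρ₀ = 0)
    (vhat₀ : B →L[ℝ] ℝ) (hvhat₀ : vhat₀ = v₀ + DΦ ρ₀)
    (Δv₀ : B →L[ℝ] ℝ) (hΔv₀ : Δv₀ = vt - vhat₀)
    (v₁ : B →L[ℝ] ℝ) (hv₁ : v₁ = v₀ + Δv₀)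
    (vlam : ℝ → (B →L[ℝ] ℝ)) (hvlam : ∀ lam : ℝ, vlam lam = (1 - lam) • v₀ + lam • v₁)
    (ρlam : ℝ → B)
    (hGP₀lam : ∀ lam ∈ Set.Ioc (0 : ℝ) 1, Gam F₀ E₀ (vlam lam) (ρlam lam) = 0)
    (hGPhat₀ : Gam (fun σ => F₀ σ + (Φ σ : EReal)) E vhat₀ ρ₀ = 0)
    (hGPhatlam : ∀ lam ∈ Set.Ioc (0 : ℝ) 1,
      Gam (fun σ => F₀ σ + (Φ σ : EReal)) E (vlam lam + DΦ (ρlam lam)) (ρlam lam) = 0)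
    -- (i) norm-to-norm continuity of DΦ at ρ₀
    (hDΦcont : ContinuousAt DΦ ρ₀)
    -- (ii) ‖ρ_λ − ρ₀‖ → 0 as λ → 0⁺
    (hρconv : Filter.Tendsto (fun lam => ‖ρlam lam - ρ₀‖) (𝓝[>] (0 : ℝ)) (𝓝 0))
    -- (iii) |⟨Δv₀, ρ_λ − ρ₀⟩| > c‖ρ_λ − ρ₀‖ for λ ∈ (0,δ)
    (hlower : ∃ c > (0 : ℝ), ∃ δ > (0 : ℝ), ∀ lam ∈ Set.Ioo (0 : ℝ) δ,
      c * ‖ρlam lam - ρ₀‖ < |Δv₀ (ρlam lam - ρ₀)|) :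
    ∃ lam₀ > (0 : ℝ), ∀ lam ∈ Set.Ioo (0 : ℝ) lam₀,
      Gam (fun σ => F₀ σ + (Φ σ : EReal)) E vt (ρlam lam)
        < Gam (fun σ => F₀ σ + (Φ σ : EReal)) E vt ρ₀ := by
  obtain ⟨c, hc, δ, hδ, hlow⟩ := hlower
  have hρ : Filter.Tendsto ρlam (𝓝[>] (0:ℝ)) (𝓝 ρ₀) :=
    tendsto_iff_norm_sub_tendsto_zero.mpr hρconv
  have hDΦ : Filter.Tendsto (fun lam => DΦ (ρlam lam)) (𝓝[>] (0:ℝ)) (𝓝 (DΦ ρ₀)) :=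
    hDΦcont.tendsto.comp hρ
  have hev : ∀ᶠ lam in 𝓝[>] (0:ℝ), ‖DΦ (ρlam lam) - DΦ ρ₀‖ < c/2 := by
    have := Metric.tendsto_nhds.mp hDΦ (c/2) (by positivity)
    filter_upwards [this] with lam h
    rwa [dist_eq_norm] at h
  obtain ⟨ε, hε, hball⟩ := Metric.mem_nhdsWithin_iff.mp hev
  refine ⟨min (min ε δ) (1/2), by positivity, ?_⟩
  rintro lam ⟨hl0, hlu⟩
  have hlε : lam < ε := lt_of_lt_of_le hlu (le_trans (min_le_left _ _) (min_le_left _ _))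
  have hlδ : lam < δ := lt_of_lt_of_le hlu (le_trans (min_le_left _ _) (min_le_right _ _))
  have hlh : lam < 1/2 := lt_of_lt_of_le hlu (min_le_right _ _)
  have hmem : lam ∈ Set.Ioc (0:ℝ) 1 := ⟨hl0, by linarith⟩
  have hDsmall : ‖DΦ (ρlam lam) - DΦ ρ₀‖ < c/2 := by
    refine hball ⟨?_, hl0⟩
    rw [Metric.mem_ball, Real.dist_eq, sub_zero, abs_of_pos hl0]
    exact hlε
  -- real value of F₀ at ρ₀ and ρlam lam
  obtain ⟨g₀, hF₀r₀, hg₀⟩ : ∃ g : ℝ, F₀ ρ₀ = (g : EReal) ∧ g = E₀ v₀ - v₀ ρ₀ :=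
    ⟨_, gam_eq_aux (hFbot ρ₀) hGP₀, rfl⟩
  obtain ⟨gl, hF₀rl, hgl⟩ : ∃ g : ℝ,
      F₀ (ρlam lam) = (g : EReal) ∧ g = E₀ (vlam lam) - vlam lam (ρlam lam) :=
    ⟨_, gam_eq_aux (hFbot (ρlam lam)) (hGP₀lam lam hmem), rfl⟩
  have hFρ₀ : F₀ ρ₀ + ((Φ ρ₀ : ℝ) : EReal) = ((g₀ + Φ ρ₀ : ℝ) : EReal) := by
    rw [hF₀r₀, ← EReal.coe_add]
  have hFrl : F₀ (ρlam lam) + ((Φ (ρlam lam) : ℝ) : EReal)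
      = ((gl + Φ (ρlam lam) : ℝ) : EReal) := by
    rw [hF₀rl, ← EReal.coe_add]
  -- inequalities from the infimum characterizations
  have h3 : E₀ v₀ ≤ gl + v₀ (ρlam lam) := by
    have := E_le_aux hE₀ v₀ (ρlam lam)
    rw [hF₀rl, ← EReal.coe_add, EReal.coe_le_coe_iff] at this
    exact this
  have h4 : E₀ (vlam lam) ≤ g₀ + vlam lam ρ₀ := by
    have := E_le_aux hE₀ (vlam lam) ρ₀
    rw [hF₀r₀, ← EReal.coe_add, EReal.coe_le_coe_iff] at this
    exact this
  have h5eq : gl + Φ (ρlam lam)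
      = E (vlam lam + DΦ (ρlam lam)) - (vlam lam + DΦ (ρlam lam)) (ρlam lam) := by
    have h' := gam_eq_aux (F := fun σ => F₀ σ + ((Φ σ : ℝ) : EReal))
      (ρ := ρlam lam)
      (by intro h; rw [EReal.add_eq_bot_iff] at h
          rcases h with h | h
          · exact hFbot _ h
          · exact (EReal.coe_ne_bot _) h)
      (hGPhatlam lam hmem)
    rw [hFrl, EReal.coe_eq_coe_iff] at h'
    exact h'
  have h5le : E (vlam lam + DΦ (ρlam lam))
      ≤ (g₀ + Φ ρ₀) + (vlam lam + DΦ (ρlam lam)) ρ₀ := by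
    have := E_le_aux hE (vlam lam + DΦ (ρlam lam)) ρ₀
    rw [hFρ₀, ← EReal.coe_add, EReal.coe_le_coe_iff] at this
    exact this
  -- pointwise formulas
  have hvl_app : ∀ x, vlam lam x = v₀ x + lam * Δv₀ x := by
    intro x
    rw [hvlam, hv₁]
    simp [ContinuousLinearMap.add_apply, ContinuousLinearMap.smul_apply, smul_eq_mul]
    ring
  have hvt_app : ∀ x, vt x = v₀ x + DΦ ρ₀ x + Δv₀ x := by
    intro x
    have hvt : vt = Δv₀ + vhat₀ := by rw [hΔv₀]; abel
    rw [hvt, hvhat₀]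
    simp [ContinuousLinearMap.add_apply]
    ring
  -- sign of Δv₀ on the increment
  have hE₀v₀ : g₀ + v₀ ρ₀ = E₀ v₀ := by rw [hg₀]; ring
  have hE₀vl : gl + vlam lam (ρlam lam) = E₀ (vlam lam) := by rw [hgl]; ring
  have h34 : lam * Δv₀ (ρlam lam) - lam * Δv₀ ρ₀ ≤ 0 := by
    have e1 := hvl_app (ρlam lam)
    have e2 := hvl_app ρ₀
    linarith [h3, h4, hE₀v₀, hE₀vl]
  have hA0 : Δv₀ (ρlam lam) - Δv₀ ρ₀ ≤ 0 := by
    by_contra h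
    push_neg at h
    nlinarith [mul_pos hl0 h]
  have hd : Δv₀ (ρlam lam - ρ₀) = Δv₀ (ρlam lam) - Δv₀ ρ₀ := map_sub _ _ _
  have hAlow : Δv₀ (ρlam lam) - Δv₀ ρ₀ < -(c * ‖ρlam lam - ρ₀‖) := by
    have h' := hlow lam ⟨hl0, hlδ⟩
    rw [hd] at h'
    rw [abs_of_nonpos hA0] at h'
    linarith
  -- operator norm bound for the DΦ variation
  have hBq : DΦ ρ₀ (ρlam lam) - DΦ ρ₀ ρ₀ - (DΦ (ρlam lam) (ρlam lam) - DΦ (ρlam lam) ρ₀)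
      ≤ (c/2) * ‖ρlam lam - ρ₀‖ := by
    have heq : (DΦ ρ₀ - DΦ (ρlam lam)) (ρlam lam - ρ₀)
        = DΦ ρ₀ (ρlam lam) - DΦ ρ₀ ρ₀ - (DΦ (ρlam lam) (ρlam lam) - DΦ (ρlam lam) ρ₀) := by
      simp [ContinuousLinearMap.sub_apply, map_sub]
      ring
    have h1 : ‖(DΦ ρ₀ - DΦ (ρlam lam)) (ρlam lam - ρ₀)‖
        ≤ ‖DΦ ρ₀ - DΦ (ρlam lam)‖ * ‖ρlam lam - ρ₀‖ :=
      ContinuousLinearMap.le_opNorm _ _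
    have h2 : ‖DΦ ρ₀ - DΦ (ρlam lam)‖ * ‖ρlam lam - ρ₀‖ ≤ (c/2) * ‖ρlam lam - ρ₀‖ := by
      apply mul_le_mul_of_nonneg_right _ (norm_nonneg _)
      rw [norm_sub_rev]
      exact le_of_lt hDsmall
    have h0 : (DΦ ρ₀ - DΦ (ρlam lam)) (ρlam lam - ρ₀)
        ≤ ‖(DΦ ρ₀ - DΦ (ρlam lam)) (ρlam lam - ρ₀)‖ := le_abs_self _
    linarith [heq ▸ h0]
  -- final real inequality
  have hprod : lam * (-(Δv₀ (ρlam lam) - Δv₀ ρ₀)) ≤ (1/2) * (-(Δv₀ (ρlam lam) - Δv₀ ρ₀)) :=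
    mul_le_mul_of_nonneg_right (le_of_lt hlh) (by linarith)
  have hgoalreal : (gl + Φ (ρlam lam)) + vt (ρlam lam) - E vt
      < (g₀ + Φ ρ₀) + vt ρ₀ - E vt := by
    have e5 : gl + Φ (ρlam lam) + (vlam lam + DΦ (ρlam lam)) (ρlam lam)
        ≤ g₀ + Φ ρ₀ + (vlam lam + DΦ (ρlam lam)) ρ₀ := by linarith [h5eq, h5le]
    have a1 : (vlam lam + DΦ (ρlam lam)) (ρlam lam)
        = v₀ (ρlam lam) + lam * Δv₀ (ρlam lam) + DΦ (ρlam lam) (ρlam lam) := by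
      rw [ContinuousLinearMap.add_apply, hvl_app]
    have a2 : (vlam lam + DΦ (ρlam lam)) ρ₀
        = v₀ ρ₀ + lam * Δv₀ ρ₀ + DΦ (ρlam lam) ρ₀ := by
      rw [ContinuousLinearMap.add_apply, hvl_app]
    have b1 := hvt_app (ρlam lam)
    have b2 := hvt_app ρ₀
    have hnn : (0:ℝ) ≤ ‖ρlam lam - ρ₀‖ := norm_nonneg _
    have hcnn : (0:ℝ) ≤ c * ‖ρlam lam - ρ₀‖ := by positivity
    linarith [e5, hBq, hAlow, hprod, hcnn]
  -- transfer to EReal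
  have gcastl : Gam (fun σ => F₀ σ + ((Φ σ : ℝ) : EReal)) E vt (ρlam lam)
      = (((gl + Φ (ρlam lam)) + vt (ρlam lam) - E vt : ℝ) : EReal) := by
    unfold Gam
    simp only
    rw [hFrl, ← EReal.coe_add, ← EReal.coe_sub]
  have gcast0 : Gam (fun σ => F₀ σ + ((Φ σ : ℝ) : EReal)) E vt ρ₀
      = (((g₀ + Φ ρ₀) + vt ρ₀ - E vt : ℝ) : EReal) := by
    unfold Gam
    simp only
    rw [hFρ₀, ← EReal.coe_add, ← EReal.coe_sub]
  rw [gcastl, gcast0, EReal.coe_lt_coe_iff]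
  exact hgoalreal
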